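/- Let r(ε) be the infimum of I(U;V) over pairs of [0,1]-valued random variables U, V with U uniformly distributed on [0,1] and E|U - V| ≤ ε. Then r(ε) ~ |log ε| as ε → 0, i.e., lim_{ε→0} r(ε)/|log ε| = 1. -/

import Mathlib

open MeasureTheory ProbabilityTheory Real Filter Set Topology
open scoped ENNReal NNReal

noncomputable def miPartitionSum {Ω 𝒳 𝒴 : Type*} [MeasureSpace Ω] {M N : ℕ}
    (X : Ω → 𝒳) (Y : Ω → 𝒴) (f : 𝒳 → Fin M) (g : 𝒴 → Fin N) : ℝ :=
  ∑ m : Fin M, ∑ n : Fin N,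
    (ℙ {ω | f (X ω) = m ∧ g (Y ω) = n}).toReal *
      Real.log ((ℙ {ω | f (X ω) = m ∧ g (Y ω) = n}).toReal /
        ((ℙ {ω | f (X ω) = m}).toReal * (ℙ {ω | g (Y ω) = n}).toReal))

/-- Mutual information as a supremum over finite measurable partitions. -/
noncomputable def mutualInformation {Ω 𝒳 𝒴 : Type*} [MeasureSpace Ω]
    [MeasurableSpace 𝒳] [MeasurableSpace 𝒴] (X : Ω → 𝒳) (Y : Ω → 𝒴) : ℝ≥0∞ :=
  ⨆ (M : ℕ) (N : ℕ) (f : 𝒳 → Fin M) (g : 𝒴 → Fin N) (_ : Measurable f) (_ : Measurable g),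
    ENNReal.ofReal (miPartitionSum X Y f g)

/-- `r(ε)`: the infimum of `I(U;V)` over `[0,1]`-valued random variables `U, V` (on some
probability space) with `U` uniform on `[0,1]` and `E|U - V| ≤ ε`. -/
noncomputable def rUnif (ε : ℝ) : ℝ≥0∞ :=
  sInf {c : ℝ≥0∞ | ∃ (Ω : Type) (_ : MeasureSpace Ω),
    IsProbabilityMeasure (ℙ : Measure Ω) ∧ ∃ U V : Ω → ℝ,
      Measurable U ∧ Measurable V ∧
      (∀ ω, U ω ∈ Set.Icc (0 : ℝ) 1) ∧ (∀ ω, V ω ∈ Set.Icc (0 : ℝ) 1) ∧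
      Measure.map U ℙ = volume.restrict (Set.Icc (0 : ℝ) 1) ∧
      (∫ ω, |U ω - V ω| ∂ℙ) ≤ ε ∧
      c = mutualInformation U V}

/-- Key Gibbs-type termwise inequality. -/
lemma key_term {q B r : ℝ} (hq : 0 ≤ q) (hqB : q ≤ B) (hr : 0 < r) :
    q * Real.log (B / q) ≤ B * r - q + q * Real.log (1 / r) := by
  rcases eq_or_lt_of_le hq with h0 | h0
  · have hB : 0 ≤ B := hqB.trans' hq
    simp [← h0]
    positivity
  · have hB : 0 < B := lt_of_lt_of_le h0 hqB
    have h1 : Real.log (B / q) = Real.log (B * r / q) + Real.log (1 / r) := by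
      rw [← Real.log_mul (by positivity) (by positivity)]
      congr 1
      field_simp
    rw [h1, mul_add]
    have h2 : Real.log (B * r / q) ≤ B * r / q - 1 :=
      Real.log_le_sub_one_of_pos (by positivity)
    have h3 : q * (B * r / q) = B * r := by field_simp
    nlinarith [mul_le_mul_of_nonneg_left h2 hq]


/-- Finite upper-bound lemma: the partition sum is at most `log |S|` where `S` supports `b`. -/
lemma lemmaA {M N' : ℕ} (p : Fin M → Fin N' → ℝ) (a : Fin M → ℝ) (b : Fin N' → ℝ)
    (S : Finset (Fin N'))
    (hp : ∀ m n, 0 ≤ p m n) (hpa : ∀ m n, p m n ≤ a m)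
    (hmarg : ∀ n, ∑ m, p m n ≤ b n)
    (hb0 : ∀ n, 0 ≤ b n) (hb1 : ∀ n, b n ≤ 1) (hbsum : ∑ n, b n = 1)
    (hS : ∀ n, n ∉ S → b n = 0) (hSne : S.Nonempty) :
    ∑ m, ∑ n, p m n * Real.log (p m n / (a m * b n)) ≤ Real.log S.card := by
  have hcard : (0:ℝ) < S.card := by exact_mod_cast Finset.card_pos.mpr hSne
  -- step 1 : each term is at most `p * log (1 / b n)`
  have step1 : ∀ m n, p m n * Real.log (p m n / (a m * b n)) ≤ p m n * Real.log (1 / b n) := by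
    intro m n
    rcases eq_or_lt_of_le (hp m n) with h0 | h0
    · simp [← h0]
    · have ha : 0 < a m := lt_of_lt_of_le h0 (hpa m n)
      have hbn : 0 < b n := by
        have : p m n ≤ b n := le_trans (Finset.single_le_sum (fun i _ => hp i n)
          (Finset.mem_univ m)) (hmarg n)
        exact lt_of_lt_of_le h0 this
      apply mul_le_mul_of_nonneg_left _ (hp m n)
      apply Real.log_le_log (by positivity)
      rw [div_le_div_iff₀ (by positivity) (by positivity)]
      nlinarith [mul_le_mul_of_nonneg_right (hpa m n) (le_of_lt hbn)]
  have hSb : ∑ n ∈ S, b n = 1 := by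
    rw [← hbsum]
    exact Finset.sum_subset (Finset.subset_univ S) (fun n _ hn => hS n hn)
  calc ∑ m, ∑ n, p m n * Real.log (p m n / (a m * b n))
      ≤ ∑ m, ∑ n, p m n * Real.log (1 / b n) := by
        apply Finset.sum_le_sum; intro m _; apply Finset.sum_le_sum; intro n _
        exact step1 m n
    _ = ∑ n, (∑ m, p m n) * Real.log (1 / b n) := by
        rw [Finset.sum_comm]
        exact Finset.sum_congr rfl (fun n _ => (Finset.sum_mul _ _ _).symm)
    _ ≤ ∑ n, b n * Real.log (1 / b n) := by
        apply Finset.sum_le_sum; intro n _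
        apply mul_le_mul_of_nonneg_right (hmarg n)
        rcases eq_or_lt_of_le (hb0 n) with h0 | h0
        · simp [← h0]
        · apply Real.log_nonneg
          rw [le_div_iff₀ h0]
          simpa using hb1 n
    _ = ∑ n ∈ S, b n * Real.log (1 / b n) := by
        symm
        apply Finset.sum_subset (Finset.subset_univ S)
        intro n _ hn
        simp [hS n hn]
    _ ≤ ∑ n ∈ S, (1 * (1 / S.card) - b n + b n * Real.log S.card) := by
        apply Finset.sum_le_sum; intro n _
        have := key_term (hb0 n) (hb1 n) (show (0:ℝ) < 1 / S.card by positivity)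
        rwa [one_div_one_div] at this
    _ = Real.log S.card := by
        have h1 : ∑ n ∈ S, b n * Real.log S.card = Real.log S.card := by
          rw [← Finset.sum_mul, hSb, one_mul]
        rw [Finset.sum_add_distrib, Finset.sum_sub_distrib, h1, hSb, Finset.sum_const,
          nsmul_eq_mul]
        field_simp
        ring

/-- Finite lower-bound lemma (Fano-type). -/
lemma lemmaB {K : ℕ} (hK : 0 < K) (p : Fin K → Fin K → ℝ) (b : Fin K → ℝ) (e : ℝ)
    (hp : ∀ m n, 0 ≤ p m n)
    (hmarg : ∀ n, ∑ m, p m n = b n)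
    (htot : ∑ m, ∑ n, p m n = 1)
    (hbad : ∑ n : Fin K, ∑ m : Fin K, (if |(m:ℤ) - (n:ℤ)| ≤ 1 then 0 else p m n) ≤ e) :
    Real.log K - Real.log 6 - e * Real.log (2*K) ≤
      ∑ m, ∑ n, p m n * Real.log (p m n / (1/K * b n)) := by
  have hKR : (0:ℝ) < K := by exact_mod_cast hK
  have hpb : ∀ m n, p m n ≤ b n := fun m n => (hmarg n) ▸
    Finset.single_le_sum (fun i _ => hp i n) (Finset.mem_univ m)
  have hb0 : ∀ n, 0 ≤ b n := fun n => le_trans (hp ⟨0, hK⟩ n) (hpb ⟨0, hK⟩ n)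
  -- identity
  have hid : ∀ m n, p m n * Real.log (p m n / (1/K * b n)) =
      p m n * Real.log K - p m n * Real.log (b n / p m n) := by
    intro m n
    rcases eq_or_lt_of_le (hp m n) with h0 | h0
    · simp [← h0]
    · have hbn : 0 < b n := lt_of_lt_of_le h0 (hpb m n)
      have h1 : p m n / (1/K * b n) = (K : ℝ) * (p m n / b n) := by
        field_simp
      rw [h1, Real.log_mul (by positivity) (by positivity),
        Real.log_div (ne_of_gt h0) (ne_of_gt hbn),
        Real.log_div (ne_of_gt hbn) (ne_of_gt h0)]
      ring
  have hsum : ∑ m, ∑ n, p m n * Real.log (p m n / (1/K * b n)) =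
      Real.log K - ∑ n, ∑ m, p m n * Real.log (b n / p m n) := by
    simp_rw [hid, Finset.sum_sub_distrib, ← Finset.sum_mul]
    rw [htot, one_mul, Finset.sum_comm]
  rw [hsum]
  -- now bound H
  set r : Fin K → Fin K → ℝ := fun m n => (if |(m:ℤ) - (n:ℤ)| ≤ 1 then 1/6 else 0) + 1/(2*K)
    with hr_def
  have hrpos : ∀ m n, 0 < r m n := by
    intro m n
    have : (0:ℝ) < 1/(2*K) := by positivity
    rcases le_or_gt |(m:ℤ) - (n:ℤ)| 1 with h | h
    · simp only [hr_def, if_pos h]; positivity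
    · simp only [hr_def, if_neg (not_le.mpr h)]; linarith
  have hcard3 : ∀ n : Fin K, ((Finset.univ.filter
      (fun m : Fin K => |(m:ℤ) - (n:ℤ)| ≤ 1)).card : ℝ) ≤ 3 := by
    intro n
    have : (Finset.univ.filter (fun m : Fin K => |(m:ℤ) - (n:ℤ)| ≤ 1)).card ≤
        (Finset.Icc (n.val - 1) (n.val + 1)).card := by
      apply Finset.card_le_card_of_injOn (fun m : Fin K => (m : ℕ))
      · intro m hm
        simp only [Finset.mem_coe, Finset.mem_filter, Finset.mem_univ, true_and] at hm
        have := abs_le.mp hm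
        simp only [Finset.mem_coe, Finset.mem_Icc]
        omega
      · intro x _ y _ h
        exact Fin.ext h
    have h2 : (Finset.Icc (n.val - 1) (n.val + 1)).card ≤ 3 := by
      rw [Nat.card_Icc]; omega
    exact_mod_cast le_trans this h2
  have hrsum : ∀ n, ∑ m, r m n ≤ 1 := by
    intro n
    simp only [hr_def]
    rw [Finset.sum_add_distrib, Finset.sum_const, ← Finset.sum_filter]
    rw [Finset.sum_const]
    simp only [nsmul_eq_mul, Finset.card_univ, Fintype.card_fin]
    have h6 : ((Finset.univ.filter (fun m : Fin K => |(m:ℤ) - (n:ℤ)| ≤ 1)).card : ℝ) * (1/6)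
        ≤ 1/2 := by
      have := hcard3 n
      linarith
    have hK2 : (K : ℝ) * (1/(2*K)) = 1/2 := by field_simp
    linarith [h6, le_of_eq hK2]
  have hH : ∑ n, ∑ m, p m n * Real.log (b n / p m n) ≤
      Real.log 6 + e * Real.log (2*K) := by
    have hstep : ∀ n, ∑ m, p m n * Real.log (b n / p m n) ≤
        ∑ m, (b n * r m n - p m n) + ∑ m, p m n * Real.log (1 / r m n) := by
      intro n
      rw [← Finset.sum_add_distrib]
      apply Finset.sum_le_sum
      intro m _
      exact key_term (hp m n) (hpb m n) (hrpos m n)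
    have hpart1 : ∀ n, ∑ m, (b n * r m n - p m n) ≤ 0 := by
      intro n
      rw [Finset.sum_sub_distrib, ← Finset.mul_sum, hmarg n]
      have := mul_le_mul_of_nonneg_left (hrsum n) (hb0 n)
      linarith
    have hlog2K : (0:ℝ) ≤ Real.log (2*K) := by
      apply Real.log_nonneg
      have : (1:ℝ) ≤ K := by exact_mod_cast hK
      linarith
    have hpart2 : ∀ n m, p m n * Real.log (1 / r m n) ≤
        (if |(m:ℤ) - (n:ℤ)| ≤ 1 then p m n * Real.log 6 else p m n * Real.log (2*K)) := by
      intro n m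
      rcases le_or_gt |(m:ℤ) - (n:ℤ)| 1 with h | h
      · rw [if_pos h]
        apply mul_le_mul_of_nonneg_left _ (hp m n)
        apply Real.log_le_log (by positivity)
        rw [div_le_iff₀ (hrpos m n)]
        have : r m n = 1/6 + 1/(2*K) := by simp only [hr_def, if_pos h]
        rw [this]
        have : (0:ℝ) < 1/(2*K) := by positivity
        nlinarith
      · rw [if_neg (not_le.mpr h)]
        have : r m n = 1/(2*K) := by simp only [hr_def, if_neg (not_le.mpr h)]; ring
        rw [this, one_div_one_div]
    calc ∑ n, ∑ m, p m n * Real.log (b n / p m n)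
        ≤ ∑ n, (∑ m, (b n * r m n - p m n) + ∑ m, p m n * Real.log (1 / r m n)) :=
          Finset.sum_le_sum (fun n _ => hstep n)
      _ ≤ ∑ n, ∑ m, p m n * Real.log (1 / r m n) := by
          apply Finset.sum_le_sum
          intro n _
          linarith [hpart1 n]
      _ ≤ ∑ n : Fin K, ∑ m : Fin K, (if |(m:ℤ) - (n:ℤ)| ≤ 1 then p m n * Real.log 6
            else p m n * Real.log (2*K)) := by
          apply Finset.sum_le_sum; intro n _
          apply Finset.sum_le_sum; intro m _
          exact hpart2 n m
      _ = Real.log 6 * (∑ n : Fin K, ∑ m : Fin K, (if |(m:ℤ) - (n:ℤ)| ≤ 1 then p m n else 0))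
          + Real.log (2*K) * (∑ n : Fin K, ∑ m : Fin K, (if |(m:ℤ) - (n:ℤ)| ≤ 1 then 0 else p m n)) := by
          rw [Finset.mul_sum, Finset.mul_sum, ← Finset.sum_add_distrib]
          apply Finset.sum_congr rfl; intro n _
          rw [Finset.mul_sum, Finset.mul_sum, ← Finset.sum_add_distrib]
          apply Finset.sum_congr rfl; intro m _
          rcases le_or_gt |(m:ℤ) - (n:ℤ)| 1 with h | h
          · simp [if_pos h]; ring
          · simp [if_neg (not_le.mpr h)]; ring
      _ ≤ Real.log 6 + e * Real.log (2*K) := by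
          have hg1 : ∑ n : Fin K, ∑ m : Fin K, (if |(m:ℤ) - (n:ℤ)| ≤ 1 then p m n else 0) ≤ 1 := by
            rw [← htot, Finset.sum_comm]
            apply Finset.sum_le_sum; intro n _
            apply Finset.sum_le_sum; intro m _
            split
            · exact le_rfl
            · exact hp _ _
          have hlog6 : (0:ℝ) ≤ Real.log 6 := by
            apply Real.log_nonneg; norm_num
          have h1 := mul_le_mul_of_nonneg_left hg1 hlog6
          have h2 := mul_le_mul_of_nonneg_left hbad hlog2K
          linarith
  linarith [hH]

section Quant

/-- quantizer of `[0,1]` into `K` cells -/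
noncomputable def quant (K : ℕ) [NeZero K] (x : ℝ) : Fin K :=
  ⟨min (K-1) ⌊x * K⌋₊, by have h := Nat.pos_of_ne_zero (NeZero.ne K); omega⟩

lemma measurable_quant (K : ℕ) [NeZero K] : Measurable (quant K) := by
  apply measurable_to_countable'
  intro m
  have h : quant K ⁻¹' {m} = (fun x : ℝ => min (K-1) ⌊x * K⌋₊) ⁻¹' {(m : ℕ)} := by
    ext x
    simp [quant, Fin.ext_iff]
  rw [h]
  exact (measurable_const.min
    (Nat.measurable_floor.comp (measurable_id.mul_const (K:ℝ))))
    (measurableSet_singleton _)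

lemma quant_bounds {K : ℕ} [NeZero K] {x : ℝ} (hx : x ∈ Set.Icc (0:ℝ) 1) :
    ((quant K x).val : ℝ) / K ≤ x ∧ x ≤ (((quant K x).val : ℝ) + 1) / K := by
  have hK : 0 < K := Nat.pos_of_ne_zero (NeZero.ne K)
  have hKR : (0:ℝ) < K := by exact_mod_cast hK
  obtain ⟨hx0, hx1⟩ := hx
  have hfl : ((⌊x * K⌋₊ : ℕ) : ℝ) ≤ x * K := Nat.floor_le (by positivity)
  constructor
  · rw [div_le_iff₀ hKR]
    calc ((quant K x).val : ℝ) ≤ (⌊x * K⌋₊ : ℝ) := by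
          exact_mod_cast min_le_right (K-1) _
      _ ≤ x * K := hfl
  · rcases le_or_gt (K-1) ⌊x * K⌋₊ with h | h
    · have hval : (quant K x).val = K - 1 := by simp [quant, min_eq_left h]
      rw [hval]
      have : ((K - 1 : ℕ) : ℝ) + 1 = (K : ℝ) := by
        have : (1:ℕ) ≤ K := hK
        push_cast [this]
        ring
      rw [this, le_div_iff₀ hKR]
      nlinarith
    · have hval : (quant K x).val = ⌊x * K⌋₊ := by simp [quant, min_eq_right (le_of_lt h)]
      rw [hval, le_div_iff₀ hKR]
      have := Nat.lt_floor_add_one (x * K)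
      push_cast at this ⊢
      linarith

lemma quant_fiber (K : ℕ) [NeZero K] (m : Fin K) :
    (quant K) ⁻¹' {m} ∩ Set.Icc (0:ℝ) 1 =
      if (m : ℕ) = K - 1 then Set.Icc (((K:ℝ)-1)/K) 1
      else Set.Ico ((m:ℝ)/K) (((m:ℝ)+1)/K) := by
  have hK : 0 < K := Nat.pos_of_ne_zero (NeZero.ne K)
  have hKR : (0:ℝ) < K := by exact_mod_cast hK
  have hm1 : (m : ℕ) + 1 ≤ K := m.isLt
  ext x
  constructor
  · rintro ⟨hq, hx0, hx1⟩
    simp only [Set.mem_preimage, Set.mem_singleton_iff] at hq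
    have hval : min (K-1) ⌊x * K⌋₊ = (m : ℕ) := by
      have := congrArg Fin.val hq
      simpa [quant] using this
    by_cases hlast : (m : ℕ) = K - 1
    · rw [if_pos hlast]
      refine ⟨?_, hx1⟩
      have hfl : K - 1 ≤ ⌊x * K⌋₊ := by omega
      have : ((K - 1 : ℕ) : ℝ) ≤ x * K := by
        calc ((K - 1 : ℕ) : ℝ) ≤ (⌊x * K⌋₊ : ℝ) := by exact_mod_cast hfl
          _ ≤ x * K := Nat.floor_le (by positivity)
      have hcast : ((K - 1 : ℕ) : ℝ) = (K:ℝ) - 1 := by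
        have : (1:ℕ) ≤ K := hK
        push_cast [this]; ring
      rw [div_le_iff₀ hKR]
      linarith [hcast ▸ this]
    · rw [if_neg hlast]
      have hfl : ⌊x * K⌋₊ = (m : ℕ) := by omega
      have h1 : ((m:ℕ) : ℝ) ≤ x * K := by
        rw [← hfl]
        exact Nat.floor_le (by positivity)
      have h2 : x * K < ((m:ℕ) : ℝ) + 1 := by
        have := Nat.lt_floor_add_one (x * K)
        rw [hfl] at this
        push_cast at this
        linarith
      constructor
      · rw [div_le_iff₀ hKR]; exact_mod_cast h1
      · rw [lt_div_iff₀ hKR]; push_cast; linarith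
  · intro hx
    by_cases hlast : (m : ℕ) = K - 1
    · rw [if_pos hlast] at hx
      obtain ⟨hxl, hxu⟩ := hx
      have hx0 : (0:ℝ) ≤ x := by
        have : (0:ℝ) ≤ ((K:ℝ)-1)/K := by
          apply div_nonneg _ (le_of_lt hKR)
          have : (1:ℝ) ≤ K := by exact_mod_cast hK
          linarith
        linarith
      have hfl : K - 1 ≤ ⌊x * K⌋₊ := by
        rw [Nat.le_floor_iff (by positivity)]
        have : ((K-1:ℕ):ℝ) = (K:ℝ) - 1 := by
          have : (1:ℕ) ≤ K := hK
          push_cast [this]; ring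
        rw [this]
        calc (K:ℝ) - 1 = (((K:ℝ)-1)/K) * K := by field_simp
          _ ≤ x * K := by nlinarith
      refine ⟨?_, hx0, hxu⟩
      simp only [Set.mem_preimage, Set.mem_singleton_iff]
      apply Fin.ext
      simp only [quant]
      omega
    · rw [if_neg hlast] at hx
      obtain ⟨hxl, hxu⟩ := hx
      have hx0 : (0:ℝ) ≤ x := le_trans (by positivity) hxl
      have hx1 : x ≤ 1 := by
        have h1 : ((m:ℝ)+1)/K ≤ 1 := by
          rw [div_le_one hKR]
          exact_mod_cast hm1
        linarith
      have hfl : ⌊x * K⌋₊ = (m : ℕ) := by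
        rw [Nat.floor_eq_iff (by positivity)]
        constructor
        · calc ((m:ℕ) : ℝ) = ((m:ℝ)/K) * K := by field_simp
            _ ≤ x * K := by nlinarith
        · calc x * K < (((m:ℝ)+1)/K) * K := by nlinarith
            _ = (m:ℝ) + 1 := by field_simp
      refine ⟨?_, hx0, hx1⟩
      simp only [Set.mem_preimage, Set.mem_singleton_iff]
      apply Fin.ext
      simp only [quant]
      omega

lemma volume_quant_fiber (K : ℕ) [NeZero K] (m : Fin K) :
    volume ((quant K) ⁻¹' {m} ∩ Set.Icc (0:ℝ) 1) = ENNReal.ofReal (1/K) := by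
  have hK : 0 < K := Nat.pos_of_ne_zero (NeZero.ne K)
  have hKR : (0:ℝ) < K := by exact_mod_cast hK
  rw [quant_fiber]
  split
  · rw [Real.volume_Icc]
    congr 1
    field_simp
    ring
  · rw [Real.volume_Ico]
    congr 1
    field_simp
    ring

end Quant

section MeasGlue

variable {Ω : Type*} [MeasureSpace Ω] [IsProbabilityMeasure (ℙ : Measure Ω)]

lemma measSet_event {M : ℕ} (X : Ω → ℝ) (hX : Measurable X) (f : ℝ → Fin M)
    (hf : Measurable f) (m : Fin M) : MeasurableSet {ω | f (X ω) = m} :=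
  (hf.comp hX) (measurableSet_singleton m)

lemma sum_fiber {N : ℕ} (W : Ω → Fin N) (hW : Measurable W) (A : Set Ω)
    (hA : MeasurableSet A) :
    ∑ n : Fin N, (ℙ (A ∩ {ω | W ω = n})).toReal = (ℙ A).toReal := by
  have hU : A = ⋃ n, A ∩ {ω | W ω = n} := by
    ext ω; simp
  have hd : Pairwise (Function.onFun Disjoint fun n => A ∩ {ω | W ω = n}) := by
    intro i j hij
    simp only [Function.onFun]
    apply Set.disjoint_left.mpr
    rintro ω ⟨_, h1⟩ ⟨_, h2⟩
    exact hij ((Set.mem_setOf_eq ▸ h1).symm.trans h2)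
  have hm : ∀ n, MeasurableSet (A ∩ {ω | W ω = n}) :=
    fun n => hA.inter (hW (measurableSet_singleton n))
  rw [← ENNReal.toReal_sum (fun n _ => measure_ne_top _ _)]
  congr 1
  conv_rhs => rw [hU]
  rw [measure_iUnion hd hm, tsum_fintype]

/-- Upper bound for mutual information when `V` has finite range. -/
lemma mi_le_log_card (U V : Ω → ℝ) (hU : Measurable U) (hV : Measurable V)
    (T : Finset ℝ) (hT : ∀ ω, V ω ∈ T) (hTne : T.Nonempty) :
    mutualInformation U V ≤ ENNReal.ofReal (Real.log T.card) := by
  apply iSup_le; intro M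
  apply iSup_le; intro N'
  apply iSup_le; intro f
  apply iSup_le; intro g
  apply iSup_le; intro hf
  apply iSup_le; intro hg
  apply ENNReal.ofReal_le_ofReal
  set p : Fin M → Fin N' → ℝ :=
    fun m n => (ℙ {ω | f (U ω) = m ∧ g (V ω) = n}).toReal with hp_def
  set a : Fin M → ℝ := fun m => (ℙ {ω | f (U ω) = m}).toReal with ha_def
  set b : Fin N' → ℝ := fun n => (ℙ {ω | g (V ω) = n}).toReal with hb_def
  set S : Finset (Fin N') := T.image g with hS_def
  have key : ∑ m, ∑ n, p m n * Real.log (p m n / (a m * b n)) ≤ Real.log S.card := by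
    apply lemmaA p a b S
    · intro m n; exact ENNReal.toReal_nonneg
    · intro m n
      apply ENNReal.toReal_mono (measure_ne_top _ _)
      exact measure_mono (fun ω h => h.1)
    · intro n
      have heq : ∀ m, {ω | f (U ω) = m ∧ g (V ω) = n} =
          {ω | g (V ω) = n} ∩ {ω | f (U ω) = m} := by
        intro m; ext ω; simp [and_comm]
      have := sum_fiber (fun ω => f (U ω)) (hf.comp hU) {ω | g (V ω) = n}
        (measSet_event V hV g hg n)
      simp only [hp_def, hb_def, heq]
      rw [this]
    · intro n; exact ENNReal.toReal_nonneg
    · intro n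
      simp only [hb_def]
      exact ENNReal.toReal_le_of_le_ofReal zero_le_one (by simp [prob_le_one])
    · have := sum_fiber (fun ω => g (V ω)) (hg.comp hV) Set.univ MeasurableSet.univ
      simp only [Set.univ_inter, measure_univ, ENNReal.toReal_one] at this
      simpa [hb_def] using this
    · intro n hn
      simp only [hb_def]
      have : ℙ {ω | g (V ω) = n} = 0 := by
        by_contra h
        obtain ⟨ω, hω⟩ := nonempty_of_measure_ne_zero h
        exact hn (Finset.mem_image.mpr ⟨V ω, hT ω, hω⟩)
      simp [this]
    · exact hTne.image g
  calc miPartitionSum U V f g ≤ Real.log S.card := key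
    _ ≤ Real.log T.card := by
      apply Real.log_le_log
      · have : 0 < S.card := Finset.card_pos.mpr (hTne.image g)
        exact_mod_cast this
      · exact_mod_cast Finset.card_image_le

omit [IsProbabilityMeasure (ℙ : Measure Ω)] in
lemma sum_toReal_measure_le {ι : Type*} [Fintype ι] (A : ι → Set Ω)
    (hA : ∀ i, MeasurableSet (A i)) (hd : Pairwise (Function.onFun Disjoint A)) (B : Set Ω)
    (hsub : ∀ i, A i ⊆ B) [IsFiniteMeasure (ℙ : Measure Ω)] :
    ∑ i, (ℙ (A i)).toReal ≤ (ℙ B).toReal := by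
  rw [← ENNReal.toReal_sum (fun i _ => measure_ne_top _ _)]
  apply ENNReal.toReal_mono (measure_ne_top _ _)
  rw [← tsum_fintype (L := .unconditional _), ← measure_iUnion hd hA]
  exact measure_mono (Set.iUnion_subset hsub)

/-- Lower bound for mutual information via the quantizer partition. -/
lemma mi_ge (U V : Ω → ℝ) (hU : Measurable U) (hV : Measurable V)
    (hUr : ∀ ω, U ω ∈ Set.Icc (0:ℝ) 1) (hVr : ∀ ω, V ω ∈ Set.Icc (0:ℝ) 1)
    (hmap : Measure.map U ℙ = volume.restrict (Set.Icc (0:ℝ) 1))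
    (K : ℕ) [NeZero K] (e : ℝ)
    (he : (ℙ {ω | 1/(K:ℝ) ≤ |U ω - V ω|}).toReal ≤ e) :
    ENNReal.ofReal (Real.log K - Real.log 6 - e * Real.log (2*K)) ≤
      mutualInformation U V := by
  have hK : 0 < K := Nat.pos_of_ne_zero (NeZero.ne K)
  have hKR : (0:ℝ) < K := by exact_mod_cast hK
  set p : Fin K → Fin K → ℝ :=
    fun m n => (ℙ {ω | quant K (U ω) = m ∧ quant K (V ω) = n}).toReal with hp_def
  set b : Fin K → ℝ := fun n => (ℙ {ω | quant K (V ω) = n}).toReal with hb_def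
  have ha : ∀ m : Fin K, (ℙ {ω | quant K (U ω) = m}).toReal = 1/(K:ℝ) := by
    intro m
    have hmeas : MeasurableSet ((quant K) ⁻¹' {m}) :=
      measurable_quant K (measurableSet_singleton m)
    have hset : {ω | quant K (U ω) = m} = U ⁻¹' ((quant K) ⁻¹' {m}) := rfl
    rw [hset, ← Measure.map_apply hU hmeas, hmap, Measure.restrict_apply hmeas,
      volume_quant_fiber]
    rw [ENNReal.toReal_ofReal (by positivity)]
  have hp : ∀ m n, 0 ≤ p m n := fun m n => ENNReal.toReal_nonneg
  have hmarg : ∀ n, ∑ m, p m n = b n := by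
    intro n
    have heq : ∀ m : Fin K, {ω | quant K (U ω) = m ∧ quant K (V ω) = n} =
        {ω | quant K (V ω) = n} ∩ {ω | quant K (U ω) = m} := by
      intro m; ext ω; simp [and_comm]
    simp only [hp_def, hb_def, heq]
    exact sum_fiber (fun ω => quant K (U ω)) ((measurable_quant K).comp hU)
      {ω | quant K (V ω) = n} (measSet_event V hV (quant K) (measurable_quant K) n)
  have htot : ∑ m, ∑ n, p m n = 1 := by
    have hinner : ∀ m : Fin K, ∑ n, p m n = (ℙ {ω | quant K (U ω) = m}).toReal := by
      intro m
      have heq : ∀ n : Fin K, {ω | quant K (U ω) = m ∧ quant K (V ω) = n} =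
          {ω | quant K (U ω) = m} ∩ {ω | quant K (V ω) = n} := by
        intro n; ext ω; simp
      simp only [hp_def, heq]
      exact sum_fiber (fun ω => quant K (V ω)) ((measurable_quant K).comp hV)
        {ω | quant K (U ω) = m} (measSet_event U hU (quant K) (measurable_quant K) m)
    simp only [hinner, ha, Finset.sum_const, Finset.card_univ, Fintype.card_fin,
      nsmul_eq_mul]
    field_simp
  have hbad : ∑ n : Fin K, ∑ m : Fin K,
      (if |(m:ℤ) - (n:ℤ)| ≤ 1 then 0 else p m n) ≤ e := by
    set A : Fin K × Fin K → Set Ω := fun q =>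
      if |(q.1:ℤ) - (q.2:ℤ)| ≤ 1 then ∅
      else {ω | quant K (U ω) = q.1 ∧ quant K (V ω) = q.2} with hA_def
    have hAm : ∀ q, MeasurableSet (A q) := by
      intro q
      simp only [hA_def]
      split
      · exact MeasurableSet.empty
      · exact (measSet_event U hU (quant K) (measurable_quant K) q.1).inter
          (measSet_event V hV (quant K) (measurable_quant K) q.2)
    have hAd : Pairwise (Function.onFun Disjoint A) := by
      intro q q' hne
      simp only [Function.onFun, hA_def]
      split_ifs with h1 h2 h2
      · exact disjoint_bot_left
      · exact disjoint_bot_left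
      · exact disjoint_bot_right
      · apply Set.disjoint_left.mpr
        rintro ω ⟨hu1, hv1⟩ ⟨hu2, hv2⟩
        exact hne (Prod.ext (hu1.symm.trans hu2) (hv1.symm.trans hv2))
    have hAsub : ∀ q, A q ⊆ {ω | 1/(K:ℝ) ≤ |U ω - V ω|} := by
      intro q
      simp only [hA_def]
      split_ifs with hgood
      · exact Set.empty_subset _
      · rintro ω ⟨hu, hv⟩
        have hmn : 2 ≤ |(q.1:ℤ) - (q.2:ℤ)| := by omega
        have hUb := quant_bounds (K := K) (hUr ω)
        have hVb := quant_bounds (K := K) (hVr ω)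
        rw [hu] at hUb
        rw [hv] at hVb
        simp only [Set.mem_setOf_eq]
        rcases le_or_gt ((q.1:ℤ)) ((q.2:ℤ)) with hle | hlt
        · have h2 : (q.1:ℤ) + 2 ≤ (q.2:ℤ) := by
            rcases abs_cases ((q.1:ℤ) - (q.2:ℤ)) with ⟨habs, _⟩ | ⟨habs, _⟩ <;> omega
          have h2R : ((q.1.val:ℝ)) + 2 ≤ ((q.2.val:ℝ)) := by exact_mod_cast h2
          have : 1/(K:ℝ) ≤ V ω - U ω := by
            have hV1 : ((q.2.val:ℝ))/K ≤ V ω := hVb.1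
            have hU1 : U ω ≤ ((q.1.val:ℝ) + 1)/K := hUb.2
            rw [div_le_iff₀ hKR] at hV1 ⊢
            rw [le_div_iff₀ hKR] at hU1
            nlinarith
          exact le_abs.mpr (Or.inr (by linarith))
        · have h2 : (q.2:ℤ) + 2 ≤ (q.1:ℤ) := by
            rcases abs_cases ((q.1:ℤ) - (q.2:ℤ)) with ⟨habs, _⟩ | ⟨habs, _⟩ <;> omega
          have h2R : ((q.2.val:ℝ)) + 2 ≤ ((q.1.val:ℝ)) := by exact_mod_cast h2
          have : 1/(K:ℝ) ≤ U ω - V ω := by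
            have hU1 : ((q.1.val:ℝ))/K ≤ U ω := hUb.1
            have hV1 : V ω ≤ ((q.2.val:ℝ) + 1)/K := hVb.2
            rw [div_le_iff₀ hKR] at hU1 ⊢
            rw [le_div_iff₀ hKR] at hV1
            nlinarith
          exact le_abs.mpr (Or.inl (by linarith))
    have hsum : ∑ n : Fin K, ∑ m : Fin K,
        (if |(m:ℤ) - (n:ℤ)| ≤ 1 then 0 else p m n) = ∑ q, (ℙ (A q)).toReal := by
      rw [Finset.sum_comm, Fintype.sum_prod_type]
      apply Finset.sum_congr rfl; intro m _
      apply Finset.sum_congr rfl; intro n _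
      simp only [hA_def]
      split
      · simp
      · rfl
    rw [hsum]
    exact le_trans (sum_toReal_measure_le A hAm hAd _ hAsub) he
  have key := lemmaB hK p b e hp hmarg htot hbad
  have hmi : miPartitionSum U V (quant K) (quant K) =
      ∑ m, ∑ n, p m n * Real.log (p m n / (1/(K:ℝ) * b n)) := by
    unfold miPartitionSum
    apply Finset.sum_congr rfl; intro m _
    apply Finset.sum_congr rfl; intro n _
    rw [ha m]
  calc ENNReal.ofReal (Real.log K - Real.log 6 - e * Real.log (2*K))
      ≤ ENNReal.ofReal (miPartitionSum U V (quant K) (quant K)) := by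
        apply ENNReal.ofReal_le_ofReal
        rw [hmi]
        exact key
    _ ≤ mutualInformation U V := by
        unfold mutualInformation
        exact le_iSup_of_le K (le_iSup_of_le K (le_iSup_of_le (quant K)
          (le_iSup_of_le (quant K) (le_iSup_of_le (measurable_quant K)
          (le_iSup_of_le (measurable_quant K) le_rfl)))))


end MeasGlue

/-- The uniform probability space on `[0,1]` realized on `ℝ`. -/
noncomputable def instUnif : MeasureSpace ℝ :=
  @MeasureSpace.mk ℝ Real.measurableSpace ((volume : Measure ℝ).restrict (Set.Icc 0 1))

theorem rUnif_le {ε : ℝ} (hε : 0 < ε) (hε2 : ε ≤ 1/2) :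
    rUnif ε ≤ ENNReal.ofReal (Real.log (1/ε)) := by
  classical
  set N : ℕ := ⌈1/(2*ε)⌉₊ with hN_def
  haveI : NeZero N := ⟨(Nat.ceil_pos.mpr (by positivity)).ne'⟩
  have hN0 : 0 < N := Nat.pos_of_ne_zero (NeZero.ne N)
  have hNR : (0:ℝ) < N := by exact_mod_cast hN0
  have hNge : 1/(2*ε) ≤ (N:ℝ) := Nat.le_ceil _
  set U : ℝ → ℝ := fun x => max 0 (min 1 x) with hU_def
  set c : Fin N → ℝ := fun k => ((k.val:ℝ) + 1/2)/N with hc_def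
  set V : ℝ → ℝ := fun x => c (quant N (U x)) with hV_def
  have hUmeas : Measurable U :=
    (continuous_const.max (continuous_const.min continuous_id)).measurable
  have hVmeas : Measurable V := by
    have : V = c ∘ quant N ∘ U := rfl
    rw [this]
    exact measurable_from_top.comp ((measurable_quant N).comp hUmeas)
  have hUr : ∀ x, U x ∈ Set.Icc (0:ℝ) 1 := by
    intro x
    constructor
    · exact le_max_left _ _
    · apply max_le (by norm_num)
      exact min_le_left _ _
  have hVr : ∀ x, V x ∈ Set.Icc (0:ℝ) 1 := by
    intro x
    have h1 : ((quant N (U x)).val : ℝ) ≤ (N:ℝ) - 1 := by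
      have h0 : (quant N (U x)).val ≤ N - 1 := by
        have := (quant N (U x)).isLt; omega
      have h2 : ((quant N (U x)).val : ℝ) ≤ ((N-1 : ℕ) : ℝ) := by exact_mod_cast h0
      have h3 : ((N-1:ℕ):ℝ) = (N:ℝ) - 1 := by
        have : (1:ℕ) ≤ N := hN0
        push_cast [this]; ring
      linarith [h3 ▸ h2]
    constructor
    · apply div_nonneg _ (le_of_lt hNR)
      positivity
    · rw [div_le_one hNR]
      linarith
  have hdist : ∀ x, |U x - V x| ≤ 1/(2*(N:ℝ)) := by
    intro x
    obtain ⟨h1, h2⟩ := quant_bounds (K := N) (hUr x)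
    set m : ℝ := ((quant N (U x)).val : ℝ) with hm_def
    have hVx : V x = (m + 1/2)/N := rfl
    rw [abs_sub_le_iff]
    constructor
    · have key : 1/(2*(N:ℝ)) + (m + 1/2)/N = (m+1)/N := by field_simp; ring
      rw [hVx, sub_le_iff_le_add, key]
      exact h2
    · have key : (m + 1/2)/(N:ℝ) = 1/(2*(N:ℝ)) + m/N := by field_simp; ring
      rw [hVx, sub_le_iff_le_add, key]
      linarith
  have hhalf : 1/(2*(N:ℝ)) ≤ ε := by
    rw [div_le_iff₀ (by positivity)]
    have h2 : 1/(2*ε) * (2*ε) ≤ (N:ℝ) * (2*ε) :=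
      mul_le_mul_of_nonneg_right hNge (by positivity)
    have h3 : 1/(2*ε) * (2*ε) = 1 := by field_simp
    calc (1:ℝ) = 1/(2*ε) * (2*ε) := h3.symm
      _ ≤ (N:ℝ) * (2*ε) := h2
      _ = ε * (2*(N:ℝ)) := by ring
  -- the witness measure, fixed before any instance shenanigans
  set μ : Measure ℝ := (volume : Measure ℝ).restrict (Set.Icc 0 1) with hμ_def
  have hprob : IsProbabilityMeasure μ := by
    constructor
    rw [hμ_def, Measure.restrict_apply_univ, Real.volume_Icc]
    norm_num
  have hmap : Measure.map U μ = μ := by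
    apply Measure.ext
    intro s hs
    rw [Measure.map_apply hUmeas hs, hμ_def, Measure.restrict_apply hs,
      Measure.restrict_apply (hUmeas hs)]
    congr 1
    ext x
    simp only [Set.mem_inter_iff, Set.mem_preimage, and_congr_left_iff]
    intro hx
    have hUx : U x = x := by
      simp only [hU_def]
      rw [min_eq_right hx.2, max_eq_right hx.1]
    rw [hUx]
  have hint : (∫ ω, |U ω - V ω| ∂μ) ≤ ε := by
    have hintg : Integrable (fun ω => |U ω - V ω|) μ := by
      apply Integrable.mono' (integrable_const (1/(2*(N:ℝ))))
        ((hUmeas.sub hVmeas).abs.aestronglyMeasurable)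
      exact ae_of_all _ (fun x => by rw [Real.norm_eq_abs, abs_abs]; exact hdist x)
    haveI := hprob
    calc (∫ ω, |U ω - V ω| ∂μ) ≤ ∫ _, ε ∂μ := by
          apply integral_mono hintg (integrable_const ε)
          intro x
          exact le_trans (hdist x) hhalf
      _ = ε := by rw [integral_const]; simp
  set T : Finset ℝ := Finset.image c Finset.univ with hT_def
  have hTmem : ∀ x, V x ∈ T :=
    fun x => Finset.mem_image.mpr ⟨quant N (U x), Finset.mem_univ _, rfl⟩
  have hTne : T.Nonempty := by
    have huniv : (Finset.univ : Finset (Fin N)).Nonempty := ⟨⟨0, hN0⟩, Finset.mem_univ _⟩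
    exact huniv.image c
  have hlog : Real.log T.card ≤ Real.log (1/ε) := by
    apply Real.log_le_log
    · exact_mod_cast Finset.card_pos.mpr hTne
    · have h1 : (T.card : ℝ) ≤ (N:ℝ) := by
        have := Finset.card_image_le (f := c) (s := Finset.univ)
        simp only [Finset.card_univ, Fintype.card_fin] at this
        exact_mod_cast this
      have h2 : (N:ℝ) < 1/(2*ε) + 1 := Nat.ceil_lt_add_one (by positivity)
      have h3 : 1/(2*ε) + 1 ≤ 1/ε := by
        rw [div_add' _ _ _ (by positivity), div_le_div_iff₀ (by positivity) (by positivity)]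
        nlinarith
      linarith
  letI inst : MeasureSpace ℝ := @MeasureSpace.mk ℝ Real.measurableSpace μ
  haveI hprob' : IsProbabilityMeasure (ℙ : Measure ℝ) := hprob
  have hmi : mutualInformation U V ≤ ENNReal.ofReal (Real.log (1/ε)) :=
    le_trans (mi_le_log_card U V hUmeas hVmeas T hTmem hTne)
      (ENNReal.ofReal_le_ofReal hlog)
  refine le_trans (sInf_le ?_) hmi
  exact ⟨ℝ, inst, hprob', U, V, hUmeas, hVmeas, hUr, hVr, hmap, hint, rfl⟩

/-- `L(ε) = log (1/ε)`. -/
noncomputable def Lg (ε : ℝ) : ℝ := Real.log (1/ε)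

/-- explicit lower bound for `r(ε)` -/
noncomputable def glow (ε : ℝ) : ℝ :=
  (Lg ε - 2*Real.log (Lg ε)) - Real.log 6 - (1/(Lg ε)^2 + ε) * (Real.log 8 + Lg ε)

lemma two_lt_Lg {ε : ℝ} (hε : 0 < ε) (hεe : ε < Real.exp (-2)) : 2 < Lg ε := by
  have h1 : Real.exp 2 < 1/ε := by
    rw [Real.exp_neg] at hεe
    rw [lt_div_iff₀ hε]
    calc Real.exp 2 * ε < Real.exp 2 * (Real.exp 2)⁻¹ := by
          apply mul_lt_mul_of_pos_left hεe (Real.exp_pos 2)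
      _ = 1 := by field_simp
  calc (2:ℝ) = Real.log (Real.exp 2) := (Real.log_exp 2).symm
    _ < Lg ε := Real.log_lt_log (Real.exp_pos 2) h1

theorem rUnif_ge {ε : ℝ} (hε : 0 < ε) (hεe : ε < Real.exp (-2)) :
    ENNReal.ofReal (glow ε) ≤ rUnif ε := by
  have hL2 : 2 < Lg ε := two_lt_Lg hε hεe
  have hLpos : 0 < Lg ε := by linarith
  set L : ℝ := Lg ε with hL_def
  set K : ℕ := ⌈1/(ε*L^2)⌉₊ with hK_def
  haveI : NeZero K := ⟨(Nat.ceil_pos.mpr (by positivity)).ne'⟩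
  have hK0 : 0 < K := Nat.pos_of_ne_zero (NeZero.ne K)
  have hKR : (0:ℝ) < K := by exact_mod_cast hK0
  have hKge : 1/(ε*L^2) ≤ (K:ℝ) := Nat.le_ceil _
  have hKlt : (K:ℝ) < 1/(ε*L^2) + 1 := Nat.ceil_lt_add_one (by positivity)
  -- the key real inequality
  have hreal : glow ε ≤ Real.log K - Real.log 6 - ((K:ℝ)*ε) * Real.log (2*K) := by
    have hlogK : L - 2*Real.log L ≤ Real.log K := by
      have h0 : (0:ℝ) < 1/(ε*L^2) := by positivity
      have heq : L - 2*Real.log L = Real.log (1/(ε*L^2)) := by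
        rw [one_div, Real.log_inv, Real.log_mul (ne_of_gt hε) (by positivity),
          Real.log_pow]
        have hLe : L = -Real.log ε := by
          rw [hL_def]; unfold Lg; rw [one_div, Real.log_inv]
        rw [hLe]; push_cast; ring
      rw [heq]
      exact Real.log_le_log h0 hKge
    have hKεle : (K:ℝ)*ε ≤ 1/L^2 + ε := by
      have h1 := mul_le_mul_of_nonneg_right (le_of_lt hKlt) (le_of_lt hε)
      have h2 : (1/(ε*L^2)+1)*ε = 1/L^2 + ε := by field_simp
      linarith [h2 ▸ h1]
    have hexp2 : (4:ℝ) ≤ Real.exp 2 := by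
      have h1 : (2:ℝ) ≤ Real.exp 1 := by
        have := Real.add_one_le_exp 1
        linarith
      have h2 : Real.exp 2 = Real.exp 1 * Real.exp 1 := by
        rw [← Real.exp_add]; norm_num
      nlinarith
    have hε4 : ε ≤ 1/4 := by
      have : Real.exp (-2) ≤ 1/4 := by
        rw [Real.exp_neg]
        rw [inv_le_comm₀ (Real.exp_pos 2) (by norm_num)]
        linarith [hexp2]
      linarith
    have hlog2K : Real.log (2*K) ≤ Real.log 8 + L := by
      have h8 : Real.log 8 + L = Real.log (8 * (1/ε)) := by
        rw [Real.log_mul (by norm_num) (by positivity)]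
        rfl
      rw [h8]
      apply Real.log_le_log (by positivity)
      have hL4 : (4:ℝ) < L^2 := by nlinarith
      have h1 : 1/(ε*L^2) ≤ 1/(4*ε) := by
        apply one_div_le_one_div_of_le (by positivity)
        nlinarith
      have h2 : (1:ℝ) ≤ 1/(4*ε) := by
        rw [le_div_iff₀ (by positivity)]
        linarith
      have h3 : (K:ℝ) ≤ 1/(2*ε) := by
        have : 1/(4*ε) + 1/(4*ε) = 1/(2*ε) := by field_simp; ring
        linarith
      have h4 : 2*(K:ℝ) ≤ 1/ε := by
        have : 2*(1/(2*ε)) = 1/ε := by field_simp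
        linarith
      linarith
    have hKε0 : (0:ℝ) ≤ (K:ℝ)*ε := by positivity
    have hlog2K0 : (0:ℝ) ≤ Real.log (2*K) := by
      apply Real.log_nonneg
      have : (1:ℝ) ≤ (K:ℝ) := by exact_mod_cast hK0
      linarith
    have hmul : (K:ℝ)*ε * Real.log (2*K) ≤ (1/L^2 + ε) * (Real.log 8 + L) := by
      apply mul_le_mul hKεle hlog2K hlog2K0
      positivity
    unfold glow
    rw [← hL_def]
    linarith
  apply le_sInf
  rintro x ⟨Ω, inst, hprob, U, V, hU, hV, hUr, hVr, hmap, hint, rfl⟩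
  haveI := hprob
  have hintg : Integrable (fun ω => |U ω - V ω|) (ℙ : Measure Ω) := by
    apply Integrable.mono' (integrable_const 2)
      ((hU.sub hV).abs.aestronglyMeasurable)
    apply ae_of_all
    intro ω
    rw [Real.norm_eq_abs, abs_abs]
    have h1 := hUr ω
    have h2 := hVr ω
    rw [Pi.sub_apply, abs_sub_le_iff]
    constructor <;> [skip; skip] <;>
      · obtain ⟨a1, a2⟩ := h1; obtain ⟨b1, b2⟩ := h2; linarith
  have hmark := mul_meas_ge_le_integral_of_nonneg
    (ae_of_all _ (fun ω => abs_nonneg (U ω - V ω))) hintg (1/(K:ℝ))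
  have he : (ℙ {ω | 1/(K:ℝ) ≤ |U ω - V ω|}).toReal ≤ (K:ℝ)*ε := by
    have h2 : (1/(K:ℝ)) * (ℙ {ω | 1/(K:ℝ) ≤ |U ω - V ω|}).toReal ≤ ε :=
      le_trans hmark hint
    have h3 := mul_le_mul_of_nonneg_left h2 (le_of_lt hKR)
    have h4 : (K:ℝ) * ((1/(K:ℝ)) * (ℙ {ω | 1/(K:ℝ) ≤ |U ω - V ω|}).toReal) =
        (ℙ {ω | 1/(K:ℝ) ≤ |U ω - V ω|}).toReal := by
      field_simp
    linarith [h4 ▸ h3]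
  exact le_trans (ENNReal.ofReal_le_ofReal hreal)
    (mi_ge U V hU hV hUr hVr hmap K ((K:ℝ)*ε) he)

/-- `r(ε) ~ |log ε|` as `ε → 0`: `lim_{ε→0} r(ε)/|log ε| = 1`. -/
theorem rUnif_asymptotic :
    Tendsto (fun ε : ℝ => (rUnif ε).toReal / |Real.log ε|) (𝓝[>] (0 : ℝ)) (𝓝 1) := by
  have hmem : Set.Ioo (0:ℝ) (Real.exp (-2)) ∈ 𝓝[>] (0:ℝ) :=
    Ioo_mem_nhdsGT_of_mem ⟨le_refl 0, Real.exp_pos _⟩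
  have hexp1 : Real.exp (-2) < 1 := by
    rw [Real.exp_lt_one_iff]; norm_num
  -- basic facts on the interval
  have hfacts : ∀ ε ∈ Set.Ioo (0:ℝ) (Real.exp (-2)),
      |Real.log ε| = Lg ε ∧ 0 < Lg ε ∧ (rUnif ε).toReal ≤ Lg ε ∧
        glow ε ≤ (rUnif ε).toReal := by
    rintro ε ⟨hε, hεe⟩
    have hε1 : ε < 1 := lt_trans hεe hexp1
    have hL2 : 2 < Lg ε := two_lt_Lg hε hεe
    have hLpos : 0 < Lg ε := by linarith
    have hLg : Lg ε = -Real.log ε := by unfold Lg; rw [one_div, Real.log_inv]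
    have habs : |Real.log ε| = Lg ε := by
      rw [abs_of_neg (Real.log_neg hε hε1), hLg]
    have hε2 : ε ≤ 1/2 := by
      have h22 : (2:ℝ) ≤ Real.exp 2 := by
        have := Real.add_one_le_exp 2; linarith
      have : Real.exp (-2) ≤ 1/2 := by
        rw [Real.exp_neg, inv_le_comm₀ (Real.exp_pos 2) (by norm_num)]
        linarith
      linarith
    have hub' : rUnif ε ≤ ENNReal.ofReal (Lg ε) := rUnif_le hε hε2
    have hub : (rUnif ε).toReal ≤ Lg ε :=
      ENNReal.toReal_le_of_le_ofReal (le_of_lt hLpos) hub'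
    have hne : rUnif ε ≠ ⊤ :=
      ne_top_of_le_ne_top ENNReal.ofReal_ne_top hub'
    have hlb : glow ε ≤ (rUnif ε).toReal := by
      rcases le_or_gt (glow ε) 0 with h0 | h0
      · exact le_trans h0 ENNReal.toReal_nonneg
      · have h1 := ENNReal.toReal_mono hne (rUnif_ge hε hεe)
        rwa [ENNReal.toReal_ofReal (le_of_lt h0)] at h1
    exact ⟨habs, hLpos, hub, hlb⟩
  -- the limit of the lower bound ratio
  have hcomp : Tendsto Lg (𝓝[>] (0:ℝ)) atTop := by
    have h1 : Tendsto (fun ε : ℝ => 1/ε) (𝓝[>] (0:ℝ)) atTop := by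
      simpa [one_div] using tendsto_inv_nhdsGT_zero
    exact Real.tendsto_log_atTop.comp h1
  have t1 : Tendsto (fun ε => Real.log (Lg ε) / Lg ε) (𝓝[>] (0:ℝ)) (𝓝 0) := by
    have := Real.isLittleO_log_id_atTop.tendsto_div_nhds_zero
    exact this.comp hcomp
  have t2 : Tendsto (fun ε => Real.log 6 / Lg ε) (𝓝[>] (0:ℝ)) (𝓝 0) :=
    tendsto_const_nhds.div_atTop hcomp
  have t5 : Tendsto (fun ε => Real.log 8 / Lg ε) (𝓝[>] (0:ℝ)) (𝓝 0) :=
    tendsto_const_nhds.div_atTop hcomp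
  have t3 : Tendsto (fun ε => 1/(Lg ε)^2) (𝓝[>] (0:ℝ)) (𝓝 0) := by
    have h2 : Tendsto (fun ε => (Lg ε)^2) (𝓝[>] (0:ℝ)) atTop :=
      (tendsto_pow_atTop two_ne_zero).comp hcomp
    simpa [one_div, Pi.inv_def] using h2.inv_tendsto_atTop
  have t4 : Tendsto (fun ε : ℝ => ε) (𝓝[>] (0:ℝ)) (𝓝 0) :=
    tendsto_id.mono_left nhdsWithin_le_nhds
  have hG : Tendsto (fun ε => 1 - 2 * (Real.log (Lg ε) / Lg ε) - Real.log 6 / Lg ε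
      - (1/(Lg ε)^2 + ε) * (Real.log 8 / Lg ε + 1)) (𝓝[>] (0:ℝ)) (𝓝 1) := by
    have h := (((tendsto_const_nhds (α := ℝ) (x := (1:ℝ)) (f := 𝓝[>] (0:ℝ))).sub
      (t1.const_mul 2)).sub t2).sub
      ((t3.add t4).mul (t5.add (tendsto_const_nhds (α := ℝ) (x := (1:ℝ))
        (f := 𝓝[>] (0:ℝ)))))
    norm_num at h
    simpa [one_div] using h
  have hglow : Tendsto (fun ε => glow ε / |Real.log ε|) (𝓝[>] (0:ℝ)) (𝓝 1) := by
    apply hG.congr'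
    filter_upwards [hmem] with ε hIoo
    obtain ⟨habs, hLpos, _, _⟩ := hfacts ε hIoo
    rw [habs]
    unfold glow
    field_simp
  apply tendsto_of_tendsto_of_tendsto_of_le_of_le' hglow tendsto_const_nhds
  · filter_upwards [hmem] with ε hIoo
    obtain ⟨habs, hLpos, _, hlb⟩ := hfacts ε hIoo
    rw [habs]
    gcongr
  · filter_upwards [hmem] with ε hIoo
    obtain ⟨habs, hLpos, hub, _⟩ := hfacts ε hIoo
    rw [habs, div_le_one hLpos]
    exact hub
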